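/- For nonnegative integers m, j define p_{m,j} = 3·2ᵐ·C(m+j, m)·∫₀¹∫₀¹ (1-a)³ aᵐ (1-(1-a)(1-b))ʲ / (3-(1-a)(2-b))^{m+j+1} db da. Then ∑_{m≥0} ∑_{j≥0} p_{m,j} = 1. -/

import Mathlib

noncomputable def pTX (m j : ℕ) : ℝ :=
  3 * 2^m * (Nat.choose (m + j) m : ℝ) *
    ∫ a in (0:ℝ)..1, ∫ b in (0:ℝ)..1,
      (1 - a)^3 * a^m * (1 - (1 - a) * (1 - b))^j / (3 - (1 - a) * (2 - b))^(m + j + 1)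

open MeasureTheory Set

namespace StitPmjAux

/-- The full integrand, with constants pulled inside. -/
noncomputable def f (m j : ℕ) (a b : ℝ) : ℝ :=
  3 * 2^m * ((m + j).choose m : ℝ) *
    ((1 - a)^3 * a^m * (1 - (1 - a) * (1 - b))^j / (3 - (1 - a) * (2 - b))^(m + j + 1))

/-- The value of the sum over `j` of `f m j a b`. -/
noncomputable def S (m : ℕ) (a : ℝ) : ℝ := 3 * (1 - a)^3 * (2*a)^m / (1 + a)^(m+1)

lemma f_meas (m j : ℕ) : Measurable (fun p : ℝ × ℝ => f m j p.1 p.2) := by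
  unfold f
  fun_prop

lemma hasSum_inner {a b : ℝ} (ha : a ∈ Icc (0:ℝ) 1) (hb : b ∈ Icc (0:ℝ) 1) (m : ℕ) :
    HasSum (fun j => f m j a b) (S m a) := by
  obtain ⟨ha0, ha1⟩ := ha
  obtain ⟨hb0, hb1⟩ := hb
  set c : ℝ := 1 - a with hc
  set x : ℝ := 1 - (1 - a) * (1 - b) with hx
  set D : ℝ := 3 - (1 - a) * (2 - b) with hD
  have hc0 : 0 ≤ c := by simp only [hc]; linarith
  have hc1 : c ≤ 1 := by simp only [hc]; linarith
  have hD1 : 1 ≤ D := by simp only [hD]; nlinarith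
  have hD0 : 0 < D := lt_of_lt_of_le one_pos hD1
  have hx0 : 0 ≤ x := by simp only [hx]; nlinarith
  have hDx : D - x = 1 + a := by simp only [hD, hx]; ring
  have hxD : x < D := by linarith
  set z : ℝ := x / D with hz
  have hz0 : 0 ≤ z := div_nonneg hx0 hD0.le
  have hz1 : z < 1 := (div_lt_one hD0).2 hxD
  have key : HasSum (fun j : ℕ => (((j + m).choose m : ℕ) : ℝ) * z ^ j)
      (1 / (1 - z)^(m+1)) :=
    hasSum_choose_mul_geometric_of_norm_lt_one m
      (by rwa [Real.norm_eq_abs, abs_of_nonneg hz0])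
  have h2 := key.mul_left (3 * 2^m * c^3 * a^m / D^(m+1))
  have hfun : (fun j => f m j a b) =
      (fun j => (3 * 2^m * c^3 * a^m / D^(m+1)) * ((((j + m).choose m : ℕ) : ℝ) * z ^ j)) := by
    funext j
    have hch : ((m + j).choose m : ℕ) = ((j + m).choose m : ℕ) := by rw [Nat.add_comm]
    rw [f, hch, hz]
    rw [div_pow]
    have hDj : D ^ j ≠ 0 := pow_ne_zero _ hD0.ne'
    have hDmj : D ^ (m + j + 1) ≠ 0 := pow_ne_zero _ hD0.ne'
    have hDm1 : D ^ (m + 1) ≠ 0 := pow_ne_zero _ hD0.ne'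
    rw [show (3 - (1 - a) * (2 - b)) ^ (m + j + 1) = D ^ (m + 1) * D ^ j by rw [hD]; ring]
    rw [hc, hx]
    ring
  have hval : (3 * 2^m * c^3 * a^m / D^(m+1)) * (1 / (1 - z)^(m+1)) = S m a := by
    have h1z : 1 - z = (1 + a) / D := by
      rw [hz, ← hDx]; field_simp
    have h1a : (0:ℝ) < 1 + a := by linarith
    rw [S, h1z, div_pow]
    have hD' : D ^ (m+1) ≠ 0 := pow_ne_zero _ hD0.ne'
    have h1a' : (1 + a) ^ (m+1) ≠ 0 := pow_ne_zero _ h1a.ne'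
    field_simp
    ring
  rw [hfun, ← hval]
  exact h2

lemma S_nonneg {a : ℝ} (ha : a ∈ Icc (0:ℝ) 1) (m : ℕ) : 0 ≤ S m a := by
  obtain ⟨ha0, ha1⟩ := ha
  have h1a : (0:ℝ) < 1 + a := by linarith
  apply div_nonneg _ (pow_nonneg h1a.le _)
  have : (0:ℝ) ≤ 1 - a := by linarith
  positivity

lemma S_le_three {a : ℝ} (ha : a ∈ Icc (0:ℝ) 1) (m : ℕ) : S m a ≤ 3 := by
  obtain ⟨ha0, ha1⟩ := ha
  have h1a : (0:ℝ) < 1 + a := by linarith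
  have h1 : (2*a)^m ≤ (1+a)^(m+1) := by
    calc (2*a)^m ≤ (1+a)^m := pow_le_pow_left₀ (by linarith) (by linarith) m
    _ ≤ (1+a)^(m+1) := pow_le_pow_right₀ (by linarith) (Nat.le_succ m)
  have h2 : (2*a)^m / (1+a)^(m+1) ≤ 1 := (div_le_one (by positivity)).2 h1
  have h3 : (1-a:ℝ)^3 ≤ 1 := by
    apply pow_le_one₀ (by linarith) (by linarith)
  calc S m a = 3 * (1-a)^3 * ((2*a)^m / (1+a)^(m+1)) := by rw [S, mul_div_assoc]
  _ ≤ 3 * 1 * 1 := by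
      apply mul_le_mul _ h2 (by positivity) (by norm_num)
      nlinarith
  _ = 3 := by norm_num

lemma hasSum_outer {a : ℝ} (ha : a ∈ Icc (0:ℝ) 1) :
    HasSum (fun m => S m a) (3 * (1 - a)^2) := by
  obtain ⟨ha0, ha1⟩ := ha
  rcases eq_or_lt_of_le ha1 with h1 | h1
  · have hz : ∀ m, S m a = 0 := by
      intro m; rw [S, ← h1]; norm_num
    have : (fun m => S m a) = (fun _ => (0:ℝ)) := funext hz
    rw [this, ← h1]
    norm_num
  · have h1a : (0:ℝ) < 1 + a := by linarith
    set r : ℝ := 2*a/(1+a) with hr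
    have hr0 : 0 ≤ r := div_nonneg (by linarith) h1a.le
    have hr1 : r < 1 := (div_lt_one h1a).2 (by linarith)
    have key := (hasSum_geometric_of_lt_one hr0 hr1).mul_left (3*(1-a)^3/(1+a))
    have hfun : (fun m => S m a) = (fun m => (3*(1-a)^3/(1+a)) * r^m) := by
      funext m
      rw [S, hr, div_pow, div_mul_div_comm, ← pow_succ']
    have hval : (3*(1-a)^3/(1+a)) * (1-r)⁻¹ = 3*(1-a)^2 := by
      have hrr : 1 - r = (1-a)/(1+a) := by rw [hr]; field_simp; ring
      have h1a' : (1:ℝ) - a ≠ 0 := by linarith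
      rw [hrr]
      field_simp
    rw [hfun, ← hval]
    exact key

lemma f_nonneg' {a b : ℝ} (ha : a ∈ Icc (0:ℝ) 1) (hb : b ∈ Icc (0:ℝ) 1) (m j : ℕ) :
    0 ≤ f m j a b := by
  obtain ⟨ha0, ha1⟩ := ha
  obtain ⟨hb0, hb1⟩ := hb
  have hD1 : (1:ℝ) ≤ 3 - (1 - a) * (2 - b) := by nlinarith
  have hx0 : (0:ℝ) ≤ 1 - (1 - a) * (1 - b) := by nlinarith
  have hc0 : (0:ℝ) ≤ 1 - a := by linarith
  rw [f]
  have h1 : (0:ℝ) ≤ (1 - a)^3 * a^m * (1 - (1-a)*(1-b))^j := by positivity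
  have h2 : (0:ℝ) ≤ (3 - (1 - a) * (2 - b))^(m+j+1) := by positivity
  have h3 : (0:ℝ) ≤ 3 * 2^m * ((m + j).choose m : ℝ) := by positivity
  exact mul_nonneg h3 (div_nonneg h1 h2)

lemma f_le_three {a b : ℝ} (ha : a ∈ Icc (0:ℝ) 1) (hb : b ∈ Icc (0:ℝ) 1) (m j : ℕ) :
    f m j a b ≤ 3 :=
  le_trans (le_hasSum (hasSum_inner ha hb m) j (fun j' _ => f_nonneg' ha hb m j'))
    (S_le_three ha m)

noncomputable def L (m j : ℕ) : ENNReal :=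
  ∫⁻ a in Ioc (0:ℝ) 1, ∫⁻ b in Ioc (0:ℝ) 1, ENNReal.ofReal (f m j a b)

lemma Lb_meas (m j : ℕ) :
    Measurable (fun a => ∫⁻ b in Ioc (0:ℝ) 1, ENNReal.ofReal (f m j a b)) := by
  exact Measurable.lintegral_prod_right' ((f_meas m j).ennreal_ofReal)

lemma fb_meas (m j : ℕ) (a : ℝ) : Measurable (fun b => f m j a b) := by
  unfold f; fun_prop

lemma Lb_ne_top (m j : ℕ) {a : ℝ} (ha : a ∈ Ioc (0:ℝ) 1) :
    (∫⁻ b in Ioc (0:ℝ) 1, ENNReal.ofReal (f m j a b)) ≠ ⊤ := by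
  have hle : (∫⁻ b in Ioc (0:ℝ) 1, ENNReal.ofReal (f m j a b))
      ≤ ∫⁻ _ in Ioc (0:ℝ) 1, ENNReal.ofReal 3 := by
    refine setLIntegral_mono measurable_const (fun b hb => ?_)
    exact ENNReal.ofReal_le_ofReal
      (f_le_three (Ioc_subset_Icc_self ha) (Ioc_subset_Icc_self hb) m j)
  rw [setLIntegral_const] at hle
  exact ne_top_of_le_ne_top
    (ENNReal.mul_ne_top ENNReal.ofReal_ne_top measure_Ioc_lt_top.ne) hle

lemma step1 (m j : ℕ) : pTX m j = (L m j).toReal := by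
  have h1 : pTX m j = ∫ a in Ioc (0:ℝ) 1, ∫ b in Ioc (0:ℝ) 1, f m j a b := by
    rw [pTX, intervalIntegral.integral_of_le zero_le_one, ← integral_const_mul]
    refine setIntegral_congr_fun measurableSet_Ioc (fun a _ => ?_)
    rw [intervalIntegral.integral_of_le zero_le_one, ← integral_const_mul]
    rfl
  rw [h1]
  have h2 : EqOn (fun a => ∫ b in Ioc (0:ℝ) 1, f m j a b)
      (fun a => (∫⁻ b in Ioc (0:ℝ) 1, ENNReal.ofReal (f m j a b)).toReal)
      (Ioc (0:ℝ) 1) := by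
    intro a haI
    simp only
    rw [integral_eq_lintegral_of_nonneg_ae]
    · filter_upwards [ae_restrict_mem measurableSet_Ioc] with b hb
      exact f_nonneg' (Ioc_subset_Icc_self haI) (Ioc_subset_Icc_self hb) m j
    · exact (fb_meas m j a).aestronglyMeasurable
  rw [setIntegral_congr_fun measurableSet_Ioc h2]
  rw [integral_eq_lintegral_of_nonneg_ae]
  · rw [L]
    congr 1
    refine setLIntegral_congr_fun measurableSet_Ioc
      (fun a haI => ?_)
    exact ENNReal.ofReal_toReal (Lb_ne_top m j haI)
  · exact Filter.Eventually.of_forall fun a => ENNReal.toReal_nonneg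
  · exact ((Lb_meas m j).ennreal_toReal).aestronglyMeasurable

lemma sumL (m : ℕ) :
    ∑' j : ℕ, L m j = ∫⁻ a in Ioc (0:ℝ) 1, ENNReal.ofReal (S m a) := by
  unfold L
  rw [← lintegral_tsum (fun j => (Lb_meas m j).aemeasurable)]
  refine setLIntegral_congr_fun measurableSet_Ioc
    (fun a haI => ?_)
  rw [← lintegral_tsum (fun j => ((fb_meas m j a).ennreal_ofReal).aemeasurable)]
  have hcongr : ∀ b ∈ Ioc (0:ℝ) 1,
      (∑' j : ℕ, ENNReal.ofReal (f m j a b)) = ENNReal.ofReal (S m a) := by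
    intro b hbI
    have hs := hasSum_inner (Ioc_subset_Icc_self haI) (Ioc_subset_Icc_self hbI) m
    rw [← ENNReal.ofReal_tsum_of_nonneg
      (fun j => f_nonneg' (Ioc_subset_Icc_self haI) (Ioc_subset_Icc_self hbI) m j)
      hs.summable, hs.tsum_eq]
  rw [setLIntegral_congr_fun measurableSet_Ioc hcongr]
  rw [setLIntegral_const, Real.volume_Ioc]
  norm_num

lemma total : (∑' m : ℕ, ∑' j : ℕ, L m j) = 1 := by
  have hSmeas : ∀ m : ℕ, Measurable fun a : ℝ => ENNReal.ofReal (S m a) := by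
    intro m; unfold S; fun_prop
  calc (∑' m : ℕ, ∑' j : ℕ, L m j)
      = ∑' m : ℕ, ∫⁻ a in Ioc (0:ℝ) 1, ENNReal.ofReal (S m a) := tsum_congr sumL
    _ = ∫⁻ a in Ioc (0:ℝ) 1, ∑' m : ℕ, ENNReal.ofReal (S m a) :=
        (lintegral_tsum fun m => (hSmeas m).aemeasurable).symm
    _ = ∫⁻ a in Ioc (0:ℝ) 1, ENNReal.ofReal (3*(1-a)^2) := by
        refine setLIntegral_congr_fun measurableSet_Ioc
          (fun a haI => ?_)
        have hs := hasSum_outer (Ioc_subset_Icc_self haI)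
        rw [← ENNReal.ofReal_tsum_of_nonneg
          (fun m => S_nonneg (Ioc_subset_Icc_self haI) m) hs.summable, hs.tsum_eq]
    _ = ENNReal.ofReal (∫ a in Ioc (0:ℝ) 1, 3*(1-a)^2) := by
        rw [← ofReal_integral_eq_lintegral_ofReal]
        · exact Continuous.integrableOn_Ioc (by continuity)
        · exact Filter.Eventually.of_forall fun a => by positivity
    _ = 1 := by
        rw [← intervalIntegral.integral_of_le zero_le_one]
        have h2 : ∫ x in (0:ℝ)..1, 3*x^2 = 1 := by
          rw [intervalIntegral.integral_const_mul, integral_pow]; norm_num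
        have h3 : ∫ a in (0:ℝ)..1, 3*(1-a)^2 = 1 := by
          have h := intervalIntegral.integral_comp_sub_left
            (a := (0:ℝ)) (b := (1:ℝ)) (fun u : ℝ => 3*u^2) 1
          norm_num at h
          rw [intervalIntegral.integral_const_mul]
          exact h
        rw [h3, ENNReal.ofReal_one]

end StitPmjAux

open StitPmjAux in
theorem stit_pmj_prob_dist :
    (∑' m : ℕ, ∑' j : ℕ, pTX m j) = 1 := by
  have htot := total
  have hLfin : ∀ m j : ℕ, L m j ≠ ⊤ := by
    intro m j
    refine ne_top_of_le_ne_top (htot ▸ ENNReal.one_ne_top) ?_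
    exact le_trans (ENNReal.le_tsum j) (ENNReal.le_tsum m)
  have hrow : ∀ m : ℕ, (∑' j : ℕ, L m j) ≠ ⊤ := by
    intro m
    exact ne_top_of_le_ne_top (htot ▸ ENNReal.one_ne_top) (ENNReal.le_tsum m)
  calc (∑' m : ℕ, ∑' j : ℕ, pTX m j)
      = ∑' m : ℕ, (∑' j : ℕ, L m j).toReal := by
        refine tsum_congr fun m => ?_
        simp_rw [step1]
        exact (ENNReal.tsum_toReal_eq (fun j => hLfin m j)).symm
    _ = (∑' m : ℕ, ∑' j : ℕ, L m j).toReal :=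
        (ENNReal.tsum_toReal_eq hrow).symm
    _ = 1 := by rw [htot]; exact ENNReal.toReal_one
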